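/- arXiv:2004.01840 — 7 statements merged into one kernel-verified Lean document; each statement's English description precedes it below -/
import Mathlib

section
/- For all classifiers t and c on a finite universe X of n ≥ 2 individuals, C(t→c) = C(t→f(c)); hence for every δ ≥ 0, c ∈ Γ_δ(t) if and only if f(c) ∈ Γ_δ(t). In particular, the transportation cost from any classifier to its own flip is zero: C(t→f(t)) = 0, so f(t) ∈ Γ_δ(t) for every δ ≥ 0. -/
open Finset

namespace Oracle

variable {n : ℕ}

def zeros (c : Fin n → Bool) : Finset (Fin n) := Finset.univ.filter (fun i => c i = false)

def ones (c : Fin n → Bool) : Finset (Fin n) := Finset.univ.filter (fun i => c i = true)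

def flip (c : Fin n → Bool) : Fin n → Bool := fun i => !(c i)

/-- Transportation cost `C(t → c)`: the fraction, among all `n.choose 2` unordered pairs
of distinct individuals, of pairs treated the same by `t` but differently by `c`.
Unordered pairs `{i,j}` with `i ≠ j` are represented as ordered pairs with `p.1 < p.2`. -/
noncomputable def cost (t c : Fin n → Bool) : ℝ :=
  ((Finset.univ.filter
      (fun p : Fin n × Fin n => p.1 < p.2 ∧ t p.1 = t p.2 ∧ c p.1 ≠ c p.2)).card : ℝ)
    / (n.choose 2 : ℝ)

/-- `C(t→c) = C(t→flip c)`, hence `c ∈ Γ_δ(t) ↔ flip c ∈ Γ_δ(t)`; in particular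
`C(t→flip t) = 0`, so `flip t ∈ Γ_δ(t)` for every `δ ≥ 0`. -/
theorem cost_flip_right {n : ℕ} (hn : 2 ≤ n) (t c : Fin n → Bool) :
    cost t c = cost t (flip c) ∧
    (∀ δ : ℝ, 0 ≤ δ → (cost t c ≤ δ ↔ cost t (flip c) ≤ δ)) ∧
    cost t (flip t) = 0 ∧
    (∀ δ : ℝ, 0 ≤ δ → cost t (flip t) ≤ δ) := by
  have h1 : cost t c = cost t (flip c) := by
    unfold cost
    congr 2
    apply congrArg
    apply Finset.filter_congr
    intro p _
    simp only [flip, ne_eq]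
    constructor
    · rintro ⟨h, ht, hc⟩; exact ⟨h, ht, fun e => hc (Bool.not_inj e)⟩
    · rintro ⟨h, ht, hc⟩; exact ⟨h, ht, fun e => hc (by rw [e])⟩
  have h2 : cost t (flip t) = 0 := by
    unfold cost
    convert zero_div _
    norm_cast
    rw [Finset.card_eq_zero, Finset.filter_eq_empty_iff]
    rintro p _ ⟨_, ht, hc⟩
    exact hc (by simp [flip, ht])
  exact ⟨h1, fun δ _ => by rw [h1], h2, fun δ hδ => h2 ▸ hδ⟩

end Oracle
end

section
/- Let t and c be classifiers on a finite universe X of n ≥ 2 individuals, let δ ≥ 0, and suppose c is δ-faithful to t. Then min{|G00(t,c)|, |G01(t,c)|} ≤ √(δ/2)·n and min{|G10(t,c)|, |G11(t,c)|} ≤ √(δ/2)·n. -/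
open Finset

namespace Oracle

variable {n : ℕ}

def G00 (u v : Fin n → Bool) : Finset (Fin n) :=
  Finset.univ.filter (fun i => u i = false ∧ v i = false)
def G01 (u v : Fin n → Bool) : Finset (Fin n) :=
  Finset.univ.filter (fun i => u i = false ∧ v i = true)
def G10 (u v : Fin n → Bool) : Finset (Fin n) :=
  Finset.univ.filter (fun i => u i = true ∧ v i = false)
def G11 (u v : Fin n → Bool) : Finset (Fin n) :=
  Finset.univ.filter (fun i => u i = true ∧ v i = true)

lemma prod_card_le (t c : Fin n → Bool) (b : Bool) :
    (Finset.univ.filter (fun i => t i = b ∧ c i = false)).card *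
    (Finset.univ.filter (fun i => t i = b ∧ c i = true)).card ≤
    (Finset.univ.filter
      (fun p : Fin n × Fin n => p.1 < p.2 ∧ t p.1 = t p.2 ∧ c p.1 ≠ c p.2)).card := by
  classical
  rw [← Finset.card_product]
  apply Finset.card_le_card_of_injOn (fun p => if p.1 < p.2 then p else (p.2, p.1))
  · intro p hp
    simp only [Finset.mem_coe, Finset.mem_product, Finset.mem_filter, Finset.mem_univ, true_and] at hp
    obtain ⟨⟨ht1, hc1⟩, ht2, hc2⟩ := hp
    have hne : p.1 ≠ p.2 := by intro h; rw [h, hc2] at hc1; simp at hc1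
    rcases lt_or_gt_of_ne hne with h | h
    · simp only [if_pos h, Finset.mem_coe, Finset.mem_filter, Finset.mem_univ, true_and]
      exact ⟨h, by rw [ht1, ht2], by rw [hc1, hc2]; simp⟩
    · simp only [if_neg (not_lt.2 h.le), Finset.mem_coe, Finset.mem_filter, Finset.mem_univ, true_and]
      exact ⟨h, by rw [ht1, ht2], by rw [hc1, hc2]; simp⟩
  · intro p hp q hq h
    simp only [Finset.mem_coe, Finset.mem_product, Finset.mem_filter, Finset.mem_univ,
      true_and] at hp hq
    obtain ⟨⟨_, hc1⟩, _, hc2⟩ := hp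
    obtain ⟨⟨_, hc3⟩, _, hc4⟩ := hq
    simp only at h
    split_ifs at h with h1 h2 h2
    · exact h
    · have : p.1 = q.2 := congrArg Prod.fst h
      rw [this, hc4] at hc1; simp at hc1
    · have : p.1 = q.2 := congrArg Prod.snd h
      rw [this, hc4] at hc1; simp at hc1
    · have e1 : p.2 = q.2 := congrArg Prod.fst h
      have e2 : p.1 = q.1 := congrArg Prod.snd h
      exact Prod.ext e2 e1

lemma min_bound {n : ℕ} (hn : 2 ≤ n) {δ : ℝ} (hδ : 0 ≤ δ)
    (t c : Fin n → Bool) (hfaithful : cost t c ≤ δ) (b : Bool) :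
    min ((Finset.univ.filter (fun i => t i = b ∧ c i = false)).card : ℝ)
        ((Finset.univ.filter (fun i => t i = b ∧ c i = true)).card : ℝ)
      ≤ Real.sqrt (δ/2) * n := by
  classical
  have hAB : ((Finset.univ.filter (fun i => t i = b ∧ c i = false)).card : ℝ) *
      ((Finset.univ.filter (fun i => t i = b ∧ c i = true)).card : ℝ) ≤
      ((Finset.univ.filter
        (fun p : Fin n × Fin n => p.1 < p.2 ∧ t p.1 = t p.2 ∧ c p.1 ≠ c p.2)).card : ℝ) := by
    exact_mod_cast prod_card_le t c b
  set A : ℝ := ((Finset.univ.filter (fun i => t i = b ∧ c i = false)).card : ℝ)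
  set B : ℝ := ((Finset.univ.filter (fun i => t i = b ∧ c i = true)).card : ℝ)
  set S : ℝ := ((Finset.univ.filter
      (fun p : Fin n × Fin n => p.1 < p.2 ∧ t p.1 = t p.2 ∧ c p.1 ≠ c p.2)).card : ℝ)
  have hch : (0:ℝ) < (n.choose 2 : ℝ) := by exact_mod_cast Nat.choose_pos hn
  have hS : S ≤ δ * (n.choose 2 : ℝ) := by
    have := hfaithful
    rw [cost, div_le_iff₀ hch] at this
    exact this
  have hch2 : (n.choose 2 : ℝ) ≤ (n:ℝ) * n / 2 := by
    rw [Nat.cast_choose_two]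
    have : (n:ℝ) - 1 ≤ (n:ℝ) := by linarith
    have hn0 : (0:ℝ) ≤ (n:ℝ) := Nat.cast_nonneg n
    nlinarith
  set m : ℝ := min A B
  have hm0 : 0 ≤ m := le_min (Nat.cast_nonneg _) (Nat.cast_nonneg _)
  have hmsq : m ^ 2 ≤ δ / 2 * (n:ℝ) ^ 2 := by
    have h1 : m ^ 2 ≤ A * B := by
      have hA : m ≤ A := min_le_left _ _
      have hB : m ≤ B := min_le_right _ _
      nlinarith
    have h2 : δ * (n.choose 2 : ℝ) ≤ δ / 2 * (n:ℝ) ^ 2 := by nlinarith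
    linarith
  calc m = Real.sqrt (m ^ 2) := (Real.sqrt_sq hm0).symm
    _ ≤ Real.sqrt (δ / 2 * (n:ℝ) ^ 2) := Real.sqrt_le_sqrt hmsq
    _ = Real.sqrt (δ / 2) * n := by
        rw [Real.sqrt_mul (by linarith : (0:ℝ) ≤ δ/2), Real.sqrt_sq (Nat.cast_nonneg n)]

/-- If `c` is `δ`-faithful to `t`, then in each of the two quadrant pairs, the smaller
quadrant has at most `√(δ/2)·n` elements. -/
theorem faithful_min_quadrant_le {n : ℕ} (hn : 2 ≤ n) {δ : ℝ} (hδ : 0 ≤ δ)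
    (t c : Fin n → Bool) (hfaithful : cost t c ≤ δ) :
    min ((G00 t c).card : ℝ) ((G01 t c).card : ℝ) ≤ Real.sqrt (δ/2) * n ∧
    min ((G10 t c).card : ℝ) ((G11 t c).card : ℝ) ≤ Real.sqrt (δ/2) * n := by
  exact ⟨min_bound hn hδ t c hfaithful false, min_bound hn hδ t c hfaithful true⟩

end Oracle
end

section
/- Let t and c be classifiers on a finite universe X of n ≥ 2 individuals, let δ ≥ 0, and suppose c is δ-faithful to t and c is δ-balanced. Then c is in close alignment with t or c is in close alignment with f(t); that is, either both |G01(t,c)| ≤ √(δ/2)·n and |G10(t,c)| ≤ √(δ/2)·n hold, or both |G00(t,c)| ≤ √(δ/2)·n and |G11(t,c)| ≤ √(δ/2)·n hold. -/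
open Finset

namespace Oracle

variable {n : ℕ}

/-- `p` and `q` are in close alignment: `|p⁰ ∩ q¹| ≤ √(δ/2)·n` and `|q⁰ ∩ p¹| ≤ √(δ/2)·n`. -/
def closeAlign (δ : ℝ) (p q : Fin n → Bool) : Prop :=
  ((zeros p ∩ ones q).card : ℝ) ≤ Real.sqrt (δ/2) * n ∧
  ((zeros q ∩ ones p).card : ℝ) ≤ Real.sqrt (δ/2) * n

/-- A classifier is `δ`-balanced if `|c⁰| > √(2δ)·n` and `|c¹| > √(2δ)·n`. -/
def balanced (δ : ℝ) (c : Fin n → Bool) : Prop :=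
  Real.sqrt (2*δ) * n < ((zeros c).card : ℝ) ∧ Real.sqrt (2*δ) * n < ((ones c).card : ℝ)

lemma zeros_decomp (t c : Fin n → Bool) : zeros c = G00 t c ∪ G10 t c := by
  ext i; simp [zeros, G00, G10]; cases t i <;> simp

lemma ones_decomp (t c : Fin n → Bool) : ones c = G01 t c ∪ G11 t c := by
  ext i; simp [ones, G01, G11]; cases t i <;> simp

lemma zeros_card (t c : Fin n → Bool) :
    (zeros c).card = (G00 t c).card + (G10 t c).card := by
  rw [zeros_decomp t c, Finset.card_union_of_disjoint]
  rw [Finset.disjoint_left]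
  intro i hi hi'
  simp [G00, G10] at hi hi'
  simp [hi.1] at hi'

lemma ones_card (t c : Fin n → Bool) :
    (ones c).card = (G01 t c).card + (G11 t c).card := by
  rw [ones_decomp t c, Finset.card_union_of_disjoint]
  rw [Finset.disjoint_left]
  intro i hi hi'
  simp [G01, G11] at hi hi'
  simp [hi.1] at hi'

lemma count_eq (t c : Fin n → Bool) :
    (Finset.univ.filter
      (fun p : Fin n × Fin n => p.1 < p.2 ∧ t p.1 = t p.2 ∧ c p.1 ≠ c p.2)).card * 2
    = ((G00 t c).card * (G01 t c).card + (G10 t c).card * (G11 t c).card) * 2 := by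
  classical
  set S := Finset.univ.filter
    (fun p : Fin n × Fin n => p.1 < p.2 ∧ t p.1 = t p.2 ∧ c p.1 ≠ c p.2) with hS
  set S' := Finset.univ.filter
    (fun p : Fin n × Fin n => p.2 < p.1 ∧ t p.1 = t p.2 ∧ c p.1 ≠ c p.2) with hS'
  set T := Finset.univ.filter
    (fun p : Fin n × Fin n => t p.1 = t p.2 ∧ c p.1 ≠ c p.2) with hT
  have hdisj : Disjoint S S' := by
    rw [Finset.disjoint_left]
    rintro p hp hp'
    simp only [hS, hS', mem_filter] at hp hp'
    exact absurd hp'.2.1 (not_lt.mpr hp.2.1.le)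
  have hTcard : T.card = S.card + S'.card := by
    rw [← Finset.card_union_of_disjoint hdisj]
    congr 1
    ext p
    simp only [hS, hS', hT, mem_union, mem_filter, mem_univ, true_and]
    constructor
    · rintro ⟨h1, h2⟩
      rcases lt_trichotomy p.1 p.2 with h | h | h
      · exact Or.inl ⟨h, h1, h2⟩
      · exact absurd (by rw [h]) h2
      · exact Or.inr ⟨h, h1, h2⟩
    · rintro (⟨_, h⟩ | ⟨_, h⟩) <;> exact h
  have hSS' : S'.card = S.card := by
    apply Finset.card_bij (fun p _ => Prod.swap p)
    · intro p hp
      simp only [hS, hS', mem_filter, mem_univ, true_and] at hp ⊢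
      exact ⟨hp.1, hp.2.1.symm, fun h => hp.2.2 h.symm⟩
    · intro p _ q _ h
      exact Prod.swap_injective h
    · intro p hp
      refine ⟨Prod.swap p, ?_, by simp⟩
      simp only [hS, hS', mem_filter, mem_univ, true_and] at hp ⊢
      exact ⟨hp.1, hp.2.1.symm, fun h => hp.2.2 h.symm⟩
  have hT2 : T = ((G00 t c ×ˢ G01 t c) ∪ (G01 t c ×ˢ G00 t c)) ∪
      ((G10 t c ×ˢ G11 t c) ∪ (G11 t c ×ˢ G10 t c)) := by
    ext p
    simp only [hT, mem_filter, mem_univ, true_and, mem_union, Finset.mem_product,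
      G00, G01, G10, G11]
    cases h1 : t p.1 <;> cases h2 : t p.2 <;> cases h3 : c p.1 <;> cases h4 : c p.2 <;> simp
  have d1 : Disjoint (G00 t c ×ˢ G01 t c) (G01 t c ×ˢ G00 t c) := by
    rw [Finset.disjoint_left]
    rintro p hp hp'
    simp only [Finset.mem_product, G00, G01, mem_filter, mem_univ, true_and] at hp hp'
    simp [hp.1.2] at hp'
  have d2 : Disjoint (G10 t c ×ˢ G11 t c) (G11 t c ×ˢ G10 t c) := by
    rw [Finset.disjoint_left]
    rintro p hp hp'
    simp only [Finset.mem_product, G10, G11, mem_filter, mem_univ, true_and] at hp hp'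
    simp [hp.1.2] at hp'
  have d3 : Disjoint ((G00 t c ×ˢ G01 t c) ∪ (G01 t c ×ˢ G00 t c))
      ((G10 t c ×ˢ G11 t c) ∪ (G11 t c ×ˢ G10 t c)) := by
    rw [Finset.disjoint_left]
    rintro p hp hp'
    simp only [mem_union, Finset.mem_product, G00, G01, G10, G11,
      mem_filter, mem_univ, true_and] at hp hp'
    rcases hp with h | h <;> rcases hp' with h' | h' <;> simp [h.1.1] at h'
  have hT3 : T.card = ((G00 t c).card * (G01 t c).card
      + (G10 t c).card * (G11 t c).card) * 2 := by
    rw [hT2, Finset.card_union_of_disjoint d3, Finset.card_union_of_disjoint d1,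
      Finset.card_union_of_disjoint d2]
    simp only [Finset.card_product]
    ring
  have := hTcard
  rw [hSS', hT3] at this
  omega

lemma choose_two (hn : 2 ≤ n) : n.choose 2 * 2 = n * (n - 1) := by
  rw [Nat.choose_two_right]
  apply Nat.div_mul_cancel
  have h2 : Even (n * (n - 1)) := by
    rcases Nat.even_or_odd n with h | h
    · exact h.mul_right _
    · exact (Nat.Odd.sub_odd h odd_one).mul_left _
  exact h2.two_dvd

/-- If `c` is `δ`-faithful to `t` and `δ`-balanced, then `c` is in close alignment with
`t` or with `flip t`: either both `|G01(t,c)| ≤ √(δ/2)·n` and `|G10(t,c)| ≤ √(δ/2)·n`,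
or both `|G00(t,c)| ≤ √(δ/2)·n` and `|G11(t,c)| ≤ √(δ/2)·n`. -/
theorem faithful_balanced_closeAlign {n : ℕ} (hn : 2 ≤ n) {δ : ℝ} (hδ : 0 ≤ δ)
    (t c : Fin n → Bool) (hfaithful : cost t c ≤ δ) (hbal : balanced δ c) :
    (((G01 t c).card : ℝ) ≤ Real.sqrt (δ/2) * n ∧
     ((G10 t c).card : ℝ) ≤ Real.sqrt (δ/2) * n) ∨
    (((G00 t c).card : ℝ) ≤ Real.sqrt (δ/2) * n ∧
     ((G11 t c).card : ℝ) ≤ Real.sqrt (δ/2) * n) := by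
  classical
  set s := Real.sqrt (δ/2) * (n:ℝ) with hs
  have hs0 : 0 ≤ s := mul_nonneg (Real.sqrt_nonneg _) (Nat.cast_nonneg n)
  have hss : s * s = δ / 2 * ((n:ℝ) * n) := by
    rw [hs, mul_mul_mul_comm, Real.mul_self_sqrt (by linarith)]
  set a := ((G00 t c).card : ℝ) with ha'
  set b := ((G01 t c).card : ℝ) with hb'
  set e := ((G10 t c).card : ℝ) with he'
  set d := ((G11 t c).card : ℝ) with hd'
  have ha0 : 0 ≤ a := Nat.cast_nonneg _
  have hb0 : 0 ≤ b := Nat.cast_nonneg _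
  have he0 : 0 ≤ e := Nat.cast_nonneg _
  have hd0 : 0 ≤ d := Nat.cast_nonneg _
  -- numerator bound
  have hchpos : (0:ℝ) < (n.choose 2 : ℝ) := by
    exact_mod_cast Nat.cast_pos.mpr (Nat.choose_pos hn)
  have hnum : a * b + e * d ≤ δ * (n.choose 2 : ℝ) := by
    have h1 := (div_le_iff₀ hchpos).mp hfaithful
    have h2 : ((Finset.univ.filter
        (fun p : Fin n × Fin n => p.1 < p.2 ∧ t p.1 = t p.2 ∧ c p.1 ≠ c p.2)).card : ℝ)
        = a * b + e * d := by
      have := count_eq t c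
      have : ((Finset.univ.filter
          (fun p : Fin n × Fin n => p.1 < p.2 ∧ t p.1 = t p.2 ∧ c p.1 ≠ c p.2)).card : ℝ) * 2
          = (a * b + e * d) * 2 := by
        rw [ha', hb', he', hd']
        exact_mod_cast this
      linarith
    rw [h2] at h1
    exact h1
  have hch2 : (n.choose 2 : ℝ) * 2 ≤ (n:ℝ) * n := by
    have h1 : (n.choose 2 * 2 : ℕ) = n * (n - 1) := choose_two hn
    have h2 : (n * (n - 1) : ℕ) ≤ n * n := Nat.mul_le_mul_left n (Nat.sub_le n 1)
    calc (n.choose 2 : ℝ) * 2 = ((n.choose 2 * 2 : ℕ) : ℝ) := by push_cast; ring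
      _ = ((n * (n-1) : ℕ) : ℝ) := by rw [h1]
      _ ≤ ((n * n : ℕ) : ℝ) := by exact_mod_cast h2
      _ = (n:ℝ) * n := by push_cast; ring
  have hnum2 : a * b + e * d ≤ s * s := by
    rw [hss]
    calc a * b + e * d ≤ δ * (n.choose 2 : ℝ) := hnum
      _ ≤ δ * ((n:ℝ) * n / 2) := by
          apply mul_le_mul_of_nonneg_left _ hδ
          linarith
      _ = δ / 2 * ((n:ℝ) * n) := by ring
  have hab : a * b ≤ s * s := by nlinarith [mul_nonneg he0 hd0]
  have hed : e * d ≤ s * s := by nlinarith [mul_nonneg ha0 hb0]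
  -- balance
  have hsqrt2 : Real.sqrt (2*δ) = 2 * Real.sqrt (δ/2) := by
    have h4 : (2:ℝ)*δ = 2^2 * (δ/2) := by ring
    rw [h4, Real.sqrt_mul (by norm_num), Real.sqrt_sq (by norm_num)]
  have hz : ((zeros c).card : ℝ) = a + e := by
    rw [ha', he', ← Nat.cast_add, zeros_card t c]
  have ho : ((ones c).card : ℝ) = b + d := by
    rw [hb', hd', ← Nat.cast_add, ones_card t c]
  have hbal1 : 2 * s < a + e := by
    have := hbal.1
    rw [hz, hsqrt2] at this
    linarith [this]
  have hbal2 : 2 * s < b + d := by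
    have := hbal.2
    rw [ho, hsqrt2] at this
    linarith [this]
  -- casework
  rcases le_or_gt b s with hb | hb
  · rcases le_or_gt e s with he | he
    · exact Or.inl ⟨hb, he⟩
    · have hd : d ≤ s := by
        by_contra h
        push_neg at h
        have : s * s < e * d := mul_lt_mul'' he h hs0 hs0
        linarith
      linarith
  · have ha : a ≤ s := by
      by_contra h
      push_neg at h
      have : s * s < a * b := mul_lt_mul'' h hb hs0 hs0
      linarith
    rcases le_or_gt d s with hd | hd
    · exact Or.inr ⟨ha, hd⟩
    · have he : e ≤ s := by
        by_contra h
        push_neg at h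
        have : s * s < e * d := mul_lt_mul'' h hd hs0 hs0
        linarith
      linarith


end Oracle
end

section
/- Let t, u, v be classifiers on a finite universe X of n individuals and let δ ≥ 0. If u is in close alignment with t and v is in close alignment with f(t), then |G00(u,v)| = |u^0 ∩ v^0| ≤ √(2δ)·n and |G11(u,v)| = |u^1 ∩ v^1| ≤ √(2δ)·n. -/
open Finset

namespace Oracle

variable {n : ℕ}

/-- If `u` is in close alignment with `t` and `v` with `flip t`, then
`|G00(u,v)| = |u⁰ ∩ v⁰| ≤ √(2δ)·n` and `|G11(u,v)| = |u¹ ∩ v¹| ≤ √(2δ)·n`. -/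
theorem closeAlign_flipped_targets {n : ℕ} {δ : ℝ} (hδ : 0 ≤ δ) (t u v : Fin n → Bool)
    (hu : closeAlign δ u t) (hv : closeAlign δ v (flip t)) :
    (G00 u v).card = (zeros u ∩ zeros v).card ∧
    ((G00 u v).card : ℝ) ≤ Real.sqrt (2*δ) * n ∧
    (G11 u v).card = (ones u ∩ ones v).card ∧
    ((G11 u v).card : ℝ) ≤ Real.sqrt (2*δ) * n := by
  have hsqrt : Real.sqrt (2*δ) = 2 * Real.sqrt (δ/2) := by
    rw [show (2*δ : ℝ) = 2^2 * (δ/2) by ring, Real.sqrt_mul (by positivity),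
      Real.sqrt_sq (by norm_num : (0:ℝ) ≤ 2)]
  have h00sub : G00 u v ⊆ (zeros u ∩ ones t) ∪ (zeros v ∩ ones (flip t)) := by
    intro i hi
    simp only [G00, zeros, ones, flip, mem_filter, mem_union, mem_inter, mem_univ,
      true_and] at hi ⊢
    rcases Bool.eq_false_or_eq_true (t i) with h | h
    · exact Or.inl ⟨hi.1, h⟩
    · exact Or.inr ⟨hi.2, by simp [h]⟩
  have h11sub : G11 u v ⊆ (zeros t ∩ ones u) ∪ (zeros (flip t) ∩ ones v) := by
    intro i hi
    simp only [G11, zeros, ones, flip, mem_filter, mem_union, mem_inter, mem_univ,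
      true_and] at hi ⊢
    rcases Bool.eq_false_or_eq_true (t i) with h | h
    · exact Or.inr ⟨by simp [h], hi.2⟩
    · exact Or.inl ⟨h, hi.1⟩
  have key : ∀ (A B C : Finset (Fin n)), A ⊆ B ∪ C →
      ((B.card : ℝ) ≤ Real.sqrt (δ/2) * n) → ((C.card : ℝ) ≤ Real.sqrt (δ/2) * n) →
      (A.card : ℝ) ≤ Real.sqrt (2*δ) * n := by
    intro A B C hsub hB hC
    calc (A.card : ℝ) ≤ ((B ∪ C).card : ℝ) := by
          exact_mod_cast card_le_card hsub
      _ ≤ (B.card : ℝ) + C.card := by exact_mod_cast card_union_le B C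
      _ ≤ Real.sqrt (δ/2) * n + Real.sqrt (δ/2) * n := add_le_add hB hC
      _ = Real.sqrt (2*δ) * n := by rw [hsqrt]; ring
  refine ⟨?_, key _ _ _ h00sub hu.1 hv.1, ?_, key _ _ _ h11sub hu.2 hv.2⟩
  · congr 1
    ext i
    simp [G00, zeros, and_comm]
  · congr 1
    ext i
    simp [G11, ones, and_comm]

end Oracle
end

section
/- Let t, u, v be classifiers on a finite universe X of n individuals, let δ ≥ 0, and suppose u and v are both in close alignment with t and |t^0| > 2√(2δ)·n and |t^1| > 2√(2δ)·n. Then |G00(u,v)| > √(2δ)·n and |G11(u,v)| > √(2δ)·n, while |G01(u,v)| ≤ √(2δ)·n and |G10(u,v)| ≤ √(2δ)·n. In particular min{|G00(u,v)|, |G01(u,v)|} ≤ √(2δ)·n < max{|G00(u,v)|, |G01(u,v)|} and min{|G10(u,v)|, |G11(u,v)|} ≤ √(2δ)·n < max{|G10(u,v)|, |G11(u,v)|}, i.e., the pair (u,v) passes the CheckSituationA test. -/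
open Finset

namespace Oracle

variable {n : ℕ}

lemma card_le_of_subset_union {A B C : Finset (Fin n)} (h : A ⊆ B ∪ C) :
    (A.card : ℝ) ≤ (B.card : ℝ) + (C.card : ℝ) := by
  have := (Finset.card_le_card h).trans (Finset.card_union_le B C)
  exact_mod_cast this

lemma card_le_of_subset_union3 {A B C D : Finset (Fin n)} (h : A ⊆ B ∪ C ∪ D) :
    (A.card : ℝ) ≤ (B.card : ℝ) + (C.card : ℝ) + (D.card : ℝ) := by
  have h1 := (Finset.card_le_card h).trans (Finset.card_union_le (B ∪ C) D)
  have h2 := Finset.card_union_le B C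
  have : A.card ≤ B.card + C.card + D.card := h1.trans (by omega)
  exact_mod_cast this

lemma sqrt_half (δ : ℝ) (hδ : 0 ≤ δ) :
    Real.sqrt (δ/2) = Real.sqrt (2*δ) / 2 := by
  rw [show δ/2 = (2*δ)/4 by ring, Real.sqrt_div (by linarith),
    show (4:ℝ) = 2^2 by norm_num, Real.sqrt_sq (by norm_num)]

/-- If `u` and `v` are both in close alignment with `t` and both sides of `t` have more than
`2√(2δ)·n` elements, then `|G00(u,v)|, |G11(u,v)| > √(2δ)·n` while
`|G01(u,v)|, |G10(u,v)| ≤ √(2δ)·n`; in particular the pair `(u,v)` passes the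
CheckSituationA test. -/
theorem closeAlign_passes_checkSituationA {n : ℕ} {δ : ℝ} (hδ : 0 ≤ δ)
    (t u v : Fin n → Bool)
    (hu : closeAlign δ u t) (hv : closeAlign δ v t)
    (ht0 : 2 * Real.sqrt (2*δ) * n < ((zeros t).card : ℝ))
    (ht1 : 2 * Real.sqrt (2*δ) * n < ((ones t).card : ℝ)) :
    (Real.sqrt (2*δ) * n < ((G00 u v).card : ℝ) ∧
     Real.sqrt (2*δ) * n < ((G11 u v).card : ℝ) ∧
     ((G01 u v).card : ℝ) ≤ Real.sqrt (2*δ) * n ∧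
     ((G10 u v).card : ℝ) ≤ Real.sqrt (2*δ) * n) ∧
    (min ((G00 u v).card : ℝ) ((G01 u v).card : ℝ) ≤ Real.sqrt (2*δ) * n ∧
     Real.sqrt (2*δ) * n < max ((G00 u v).card : ℝ) ((G01 u v).card : ℝ) ∧
     min ((G10 u v).card : ℝ) ((G11 u v).card : ℝ) ≤ Real.sqrt (2*δ) * n ∧
     Real.sqrt (2*δ) * n < max ((G10 u v).card : ℝ) ((G11 u v).card : ℝ)) := by
  obtain ⟨hu1, hu2⟩ := hu
  obtain ⟨hv1, hv2⟩ := hv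
  rw [sqrt_half δ hδ] at hu1 hu2 hv1 hv2
  -- G01 ⊆ (zeros u ∩ ones t) ∪ (zeros t ∩ ones v)
  have s01 : G01 u v ⊆ (zeros u ∩ ones t) ∪ (zeros t ∩ ones v) := by
    intro i hi
    simp only [G01, zeros, ones, Finset.mem_filter, Finset.mem_union, Finset.mem_inter,
      Finset.mem_univ, true_and] at hi ⊢
    cases h : t i <;> simp [hi.1, hi.2, h]
  have s10 : G10 u v ⊆ (zeros t ∩ ones u) ∪ (zeros v ∩ ones t) := by
    intro i hi
    simp only [G10, zeros, ones, Finset.mem_filter, Finset.mem_union, Finset.mem_inter,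
      Finset.mem_univ, true_and] at hi ⊢
    cases h : t i <;> simp [hi.1, hi.2, h]
  have s00 : zeros t ⊆ G00 u v ∪ (zeros t ∩ ones u) ∪ (zeros t ∩ ones v) := by
    intro i hi
    simp only [G00, zeros, ones, Finset.mem_filter, Finset.mem_union, Finset.mem_inter,
      Finset.mem_univ, true_and] at hi ⊢
    cases hui : u i <;> cases hvi : v i <;> simp [hi, hui, hvi]
  have s11 : ones t ⊆ G11 u v ∪ (zeros u ∩ ones t) ∪ (zeros v ∩ ones t) := by
    intro i hi
    simp only [G11, zeros, ones, Finset.mem_filter, Finset.mem_union, Finset.mem_inter,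
      Finset.mem_univ, true_and] at hi ⊢
    cases hui : u i <;> cases hvi : v i <;> simp [hi, hui, hvi]
  have h01 := card_le_of_subset_union s01
  have h10 := card_le_of_subset_union s10
  have h00 := card_le_of_subset_union3 s00
  have h11 := card_le_of_subset_union3 s11
  have k01 : ((G01 u v).card : ℝ) ≤ Real.sqrt (2*δ) * n := by linarith
  have k10 : ((G10 u v).card : ℝ) ≤ Real.sqrt (2*δ) * n := by linarith
  have k00 : Real.sqrt (2*δ) * n < ((G00 u v).card : ℝ) := by linarith
  have k11 : Real.sqrt (2*δ) * n < ((G11 u v).card : ℝ) := by linarith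
  refine ⟨⟨k00, k11, k01, k10⟩, ?_, ?_, ?_, ?_⟩
  · exact le_trans (min_le_right _ _) k01
  · exact lt_of_lt_of_le k00 (le_max_left _ _)
  · exact le_trans (min_le_left _ _) k10
  · exact lt_of_lt_of_le k11 (le_max_right _ _)

end Oracle
end

section
/- Let t and v be classifiers on a finite universe X of n ≥ 2 individuals, and let w = MergeOnes(t, v). Then w^0 ⊆ t^0 and C(t→w) ≤ C(t→v). Consequently, for every δ ≥ 0, if v ∈ Γ_δ(t) then MergeOnes(t, v) ∈ Γ_δ(t). -/
open Finset

namespace Oracle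

variable {n : ℕ}

/-- `MergeOnes(t, v)`: the classifier whose set of ones is `t¹ ∪ v¹`. -/
def mergeOnes2 (t v : Fin n → Bool) : Fin n → Bool := fun i => t i || v i

/-- For `w = MergeOnes(t,v)`: `w⁰ ⊆ t⁰` and `C(t→w) ≤ C(t→v)`; consequently
`v ∈ Γ_δ(t)` implies `MergeOnes(t,v) ∈ Γ_δ(t)`. -/
theorem mergeOnes_faithful {n : ℕ} (hn : 2 ≤ n) (t v : Fin n → Bool) :
    zeros (mergeOnes2 t v) ⊆ zeros t ∧
    cost t (mergeOnes2 t v) ≤ cost t v ∧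
    (∀ δ : ℝ, 0 ≤ δ → cost t v ≤ δ → cost t (mergeOnes2 t v) ≤ δ) := by
  have hcost : cost t (mergeOnes2 t v) ≤ cost t v := by
    unfold cost
    apply div_le_div_of_nonneg_right ?_ ?_ |>.trans_eq rfl
    · exact_mod_cast Nat.cast_le.mpr (Finset.card_le_card (by
        intro p hp
        simp only [Finset.mem_filter, Finset.mem_univ, true_and] at hp ⊢
        obtain ⟨h1, h2, h3⟩ := hp
        refine ⟨h1, h2, ?_⟩
        intro hv
        apply h3
        simp [mergeOnes2, h2, hv]))
    · have : 0 < n.choose 2 := Nat.choose_pos hn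
      exact_mod_cast this.le
  refine ⟨?_, hcost, fun δ _ hv => hcost.trans hv⟩
  intro i hi
  simp only [zeros, Finset.mem_filter, Finset.mem_univ, true_and, mergeOnes2,
    Bool.or_eq_false_iff] at hi ⊢
  exact hi.1

end Oracle
end

section
/- Let t, v_1, …, v_k be classifiers on a finite universe X of n ≥ 2 individuals, and let w = MergeOnes(t, v_1, …, v_k). Then w^0 ⊆ t^0 and C(t→w) ≤ C(t→v_1) + C(t→v_2) + … + C(t→v_k). -/
open Finset

namespace Oracle

variable {n : ℕ}

/-- `MergeOnes(p₁, …, pₖ)`: the classifier whose set of ones is `p₁¹ ∪ ⋯ ∪ pₖ¹`. -/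
def mergeOnesFam {k : ℕ} (t : Fin n → Bool) (v : Fin k → (Fin n → Bool)) : Fin n → Bool :=
  fun i => t i || decide (∃ l, v l i = true)

/-- For `w = MergeOnes(t, v₁, …, vₖ)`: `w⁰ ⊆ t⁰` and
`C(t→w) ≤ C(t→v₁) + ⋯ + C(t→vₖ)`. -/
theorem mergeOnes_family_cost {n k : ℕ} (hn : 2 ≤ n)
    (t : Fin n → Bool) (v : Fin k → (Fin n → Bool)) :
    zeros (mergeOnesFam t v) ⊆ zeros t ∧
    cost t (mergeOnesFam t v) ≤ ∑ l : Fin k, cost t (v l) := by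
  constructor
  · intro i hi
    simp only [zeros, mem_filter, mem_univ, true_and, mergeOnesFam,
      Bool.or_eq_false_iff] at hi ⊢
    exact hi.1
  · have hc : (0:ℝ) < (n.choose 2 : ℝ) := by
      exact_mod_cast Nat.choose_pos hn
    have key : (Finset.univ.filter
        (fun p : Fin n × Fin n => p.1 < p.2 ∧ t p.1 = t p.2 ∧
          mergeOnesFam t v p.1 ≠ mergeOnesFam t v p.2)) ⊆
        Finset.univ.biUnion (fun l : Fin k => Finset.univ.filter
          (fun p : Fin n × Fin n => p.1 < p.2 ∧ t p.1 = t p.2 ∧ v l p.1 ≠ v l p.2)) := by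
      intro p hp
      simp only [mem_filter, mem_univ, true_and, mem_biUnion] at hp ⊢
      obtain ⟨h1, h2, h3⟩ := hp
      have hex : ∃ l, v l p.1 ≠ v l p.2 := by
        by_contra h
        push_neg at h
        apply h3
        simp only [mergeOnesFam, h2]
        simp only [h]
      obtain ⟨l, hl⟩ := hex
      exact ⟨l, h1, h2, hl⟩
    have hcard : ((Finset.univ.filter
        (fun p : Fin n × Fin n => p.1 < p.2 ∧ t p.1 = t p.2 ∧
          mergeOnesFam t v p.1 ≠ mergeOnesFam t v p.2)).card : ℝ) ≤
        ∑ l : Fin k, ((Finset.univ.filter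
          (fun p : Fin n × Fin n => p.1 < p.2 ∧ t p.1 = t p.2 ∧
            v l p.1 ≠ v l p.2)).card : ℝ) := by
      have := le_trans (Finset.card_le_card key) (Finset.card_biUnion_le)
      exact_mod_cast this
    simp only [cost, ← Finset.sum_div]
    exact div_le_div_of_nonneg_right hcard hc.le |>.trans_eq rfl
end Oracle
end
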